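/- arXiv:2512.07003 — 2 statements merged into one kernel-verified Lean document; each statement's English description precedes it below -/
import Mathlib

section
/- Let X be uniformly distributed on the unit simplex in R^n. Then for every x ∈ R, P[n · max_i X_i ≤ x + ln n] → exp(−e^{−x}) as n → ∞ (Gumbel limit for the maximum coordinate). -/
open MeasureTheory ProbabilityTheory

/-- The uniform probability distribution on the unit simplex
`Δ^n = {x ∈ [0,∞)^n : x_1 + ... + x_n = 1}`, i.e. normalized `(n-1)`-dimensional
Hausdorff (surface) measure on the simplex; equivalently `Dirichlet(1,...,1)`. -/
noncomputable def simplexUniform (n : ℕ) : Measure (Fin n → ℝ) :=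
  (μH[(n : ℝ) - 1] {x : Fin n → ℝ | (∀ i, 0 ≤ x i) ∧ ∑ i, x i = 1})⁻¹ •
    (μH[(n : ℝ) - 1]).restrict {x : Fin n → ℝ | (∀ i, 0 ≤ x i) ∧ ∑ i, x i = 1}

open Filter Finset Set
open scoped Pointwise NNReal ENNReal


private lemma aux_log_div_tendsto : Tendsto (fun n : ℕ => Real.log n / n) atTop (nhds 0) := by
  have h := (Real.tendsto_pow_log_div_mul_add_atTop 1 0 1 one_ne_zero).comp
    (tendsto_natCast_atTop_atTop (R := ℝ))
  simpa [Function.comp_def] using h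

private lemma aux_sq_log_div_tendsto (x : ℝ) :
    Tendsto (fun n : ℕ => (x + Real.log n) ^ 2 / n) atTop (nhds 0) := by
  have h1 : Tendsto (fun n : ℕ => x ^ 2 * (1 / n)) atTop (nhds (x ^ 2 * 0)) :=
    (tendsto_one_div_atTop_nhds_zero_nat).const_mul _
  have h2 : Tendsto (fun n : ℕ => 2 * x * (Real.log n / n)) atTop (nhds (2 * x * 0)) :=
    aux_log_div_tendsto.const_mul _
  have h3 := (Real.tendsto_pow_log_div_mul_add_atTop 1 0 2 one_ne_zero).comp
    (tendsto_natCast_atTop_atTop (R := ℝ))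
  have h3' : Tendsto (fun n : ℕ => Real.log n ^ 2 / n) atTop (nhds 0) := by simpa [Function.comp_def] using h3
  have := (h1.add h2).add h3'
  simp only [mul_zero, add_zero, zero_add] at this
  refine this.congr fun n => ?_
  field_simp
  ring

private lemma aux_u_tendsto (x : ℝ) (k : ℕ) :
    Tendsto (fun n : ℕ => (k : ℝ) * ((x + Real.log n) / n)) atTop (nhds 0) := by
  have h1 : Tendsto (fun n : ℕ => (k : ℝ) * x * (1 / n)) atTop (nhds ((k : ℝ) * x * 0)) :=
    (tendsto_one_div_atTop_nhds_zero_nat).const_mul _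
  have h2 : Tendsto (fun n : ℕ => (k : ℝ) * (Real.log n / n)) atTop (nhds ((k : ℝ) * 0)) :=
    aux_log_div_tendsto.const_mul _
  have := h1.add h2
  simp only [mul_zero, add_zero] at this
  refine this.congr fun n => ?_
  field_simp

/-- Step A : `choose n k / n^k → 1/k!`. -/
private lemma aux_choose_div_pow (k : ℕ) :
    Tendsto (fun n : ℕ => (n.choose k : ℝ) / (n : ℝ) ^ k) atTop
      (nhds (1 / k.factorial)) := by
  have hprod : Tendsto (fun n : ℕ => ∏ i ∈ range k, (1 - (i : ℝ) / n)) atTop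
      (nhds (∏ i ∈ range k, (1 : ℝ))) := by
    refine tendsto_finset_prod _ fun i _ => ?_
    have : Tendsto (fun n : ℕ => (i : ℝ) * (1 / n)) atTop (nhds ((i : ℝ) * 0)) :=
      (tendsto_one_div_atTop_nhds_zero_nat).const_mul _
    have h := (tendsto_const_nhds (x := (1 : ℝ)) (f := atTop (α := ℕ))).sub this
    simp only [mul_zero, sub_zero] at h
    refine h.congr fun n => ?_
    rw [mul_one_div]
  rw [Finset.prod_const_one] at hprod
  have h := hprod.div_const (k.factorial : ℝ)
  refine (h.congr' ?_)
  filter_upwards [eventually_ge_atTop (k + 1)] with n hn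
  have hn0 : (0 : ℝ) < (n : ℝ) := by exact_mod_cast Nat.pos_of_ne_zero (by omega)
  have hkn : k ≤ n := by omega
  have hcast : ((n.descFactorial k : ℕ) : ℝ) = ∏ i ∈ range k, ((n : ℝ) - i) := by
    rw [Nat.descFactorial_eq_prod_range, Nat.cast_prod]
    refine Finset.prod_congr rfl fun i hi => ?_
    have : i ≤ n := by
      have := Finset.mem_range.mp hi; omega
    push_cast [Nat.cast_sub this]
    ring
  have hdesc : ((n.descFactorial k : ℕ) : ℝ) = (k.factorial : ℝ) * n.choose k := by
    rw [Nat.descFactorial_eq_factorial_mul_choose]; push_cast; ring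
  have hfac : (0 : ℝ) < (k.factorial : ℝ) := by positivity
  have hprodeq : ∏ i ∈ range k, (1 - (i : ℝ) / n) = (∏ i ∈ range k, ((n : ℝ) - i)) / n ^ k := by
    have : ∏ i ∈ range k, (1 - (i : ℝ) / n) = ∏ i ∈ range k, (((n : ℝ) - i) / n) := by
      refine Finset.prod_congr rfl fun i _ => ?_
      field_simp
    rw [this, Finset.prod_div_distrib, Finset.prod_const, Finset.card_range]
  rw [hprodeq, ← hcast, hdesc]
  field_simp

/-- `|u + log(1-u)| ≤ 2u²` for `|u| ≤ 1/2`. -/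
private lemma aux_log_approx {u : ℝ} (hu : |u| ≤ 1/2) :
    |u + Real.log (1 - u)| ≤ 2 * u ^ 2 := by
  have hu1 : |u| < 1 := by linarith [abs_nonneg u]
  have h := Real.abs_log_sub_add_sum_range_le hu1 1
  simp only [Finset.range_one, Finset.sum_singleton, pow_one, Nat.cast_zero, zero_add, div_one] at h
  have h2 : |u| ^ 2 / (1 - |u|) ≤ 2 * u ^ 2 := by
    rw [div_le_iff₀ (by linarith)]
    have : |u| ^ 2 = u ^ 2 := sq_abs u
    nlinarith [sq_nonneg u, abs_nonneg u]
  calc |u + Real.log (1 - u)| ≤ |u| ^ (1+1) / (1 - |u|) := h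
    _ ≤ 2 * u ^ 2 := h2

/-- Step B: exponent convergence. -/
private lemma aux_exponent (x : ℝ) (k : ℕ) :
    Tendsto (fun n : ℕ => (k : ℝ) * Real.log n
        + ((n : ℝ) - 1) * Real.log (1 - (k : ℝ) * ((x + Real.log n) / n)))
      atTop (nhds (-((k : ℝ) * x))) := by
  set u : ℕ → ℝ := fun n => (k : ℝ) * ((x + Real.log n) / n) with hu
  have hu0 : Tendsto u atTop (nhds 0) := aux_u_tendsto x k
  -- second piece : (n-1) * (u n + log (1 - u n)) → 0
  have hT2 : Tendsto (fun n : ℕ => ((n : ℝ) - 1) * (u n + Real.log (1 - u n))) atTop (nhds 0) := by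
    have hb : Tendsto (fun n : ℕ => 2 * (k : ℝ) ^ 2 * ((x + Real.log n) ^ 2 / n)) atTop
        (nhds (2 * (k : ℝ) ^ 2 * 0)) := (aux_sq_log_div_tendsto x).const_mul _
    rw [mul_zero] at hb
    refine squeeze_zero_norm' ?_ hb
    have hev : ∀ᶠ n : ℕ in atTop, |u n| ≤ 1/2 := by
      have h := hu0.abs
      rw [abs_zero] at h
      simpa using h.eventually_le_const (by norm_num : (0:ℝ) < 1/2)
    filter_upwards [hev, eventually_ge_atTop 1] with n hn hn1
    have hn0 : (0 : ℝ) < (n : ℝ) := by exact_mod_cast hn1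
    have hlog := aux_log_approx hn
    have h1 : ((n : ℝ) - 1) ≥ 0 := by
      have : (1 : ℝ) ≤ (n : ℝ) := by exact_mod_cast hn1
      linarith
    have h2 : |((n : ℝ) - 1) * (u n + Real.log (1 - u n))| ≤ ((n : ℝ) - 1) * (2 * u n ^ 2) := by
      rw [abs_mul, abs_of_nonneg h1]
      exact mul_le_mul_of_nonneg_left hlog h1
    have h3 : ((n : ℝ) - 1) * (2 * u n ^ 2) ≤ (n : ℝ) * (2 * u n ^ 2) := by
      have : (0:ℝ) ≤ 2 * u n ^ 2 := by positivity
      nlinarith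
    have h4 : (n : ℝ) * (2 * u n ^ 2) = 2 * (k : ℝ) ^ 2 * ((x + Real.log n) ^ 2 / n) := by
      rw [hu]
      field_simp
    calc ‖((n : ℝ) - 1) * (u n + Real.log (1 - u n))‖
        ≤ ((n : ℝ) - 1) * (2 * u n ^ 2) := h2
      _ ≤ (n : ℝ) * (2 * u n ^ 2) := h3
      _ = 2 * (k : ℝ) ^ 2 * ((x + Real.log n) ^ 2 / n) := h4
  have hmain : Tendsto (fun n : ℕ => u n + ((n : ℝ) - 1) * (u n + Real.log (1 - u n))
      - (k : ℝ) * x) atTop (nhds (-((k : ℝ) * x))) := by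
    have := (hu0.add hT2).sub_const ((k : ℝ) * x)
    simpa using this
  refine hmain.congr' ?_
  filter_upwards [eventually_ge_atTop 1] with n hn1
  have hn0 : (n : ℝ) ≠ 0 := by
    have : (0:ℝ) < n := by exact_mod_cast hn1
    linarith
  have hnu : (n : ℝ) * u n = (k : ℝ) * (x + Real.log n) := by
    rw [hu]; field_simp
  have : u n + ((n : ℝ) - 1) * (u n + Real.log (1 - u n)) - (k : ℝ) * x
      = (n : ℝ) * u n - (k : ℝ) * x + ((n : ℝ) - 1) * Real.log (1 - u n) := by ring
  rw [this, hnu]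
  ring

/-- The pointwise limit of a single term. -/
private lemma aux_term_tendsto (x : ℝ) (k : ℕ) :
    Tendsto (fun n : ℕ => (n.choose k : ℝ)
        * max (1 - (k : ℝ) * ((x + Real.log n) / n)) 0 ^ (n - 1))
      atTop (nhds (Real.exp (-((k : ℝ) * x)) / k.factorial)) := by
  set u : ℕ → ℝ := fun n => (k : ℝ) * ((x + Real.log n) / n) with hu
  have hu0 : Tendsto u atTop (nhds 0) := aux_u_tendsto x k
  have hA := aux_choose_div_pow k
  have hB := (aux_exponent x k).comp (tendsto_id (x := atTop (α := ℕ)))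
  have hexp : Tendsto (fun n : ℕ => Real.exp ((k : ℝ) * Real.log n
      + ((n : ℝ) - 1) * Real.log (1 - u n))) atTop (nhds (Real.exp (-((k : ℝ) * x)))) :=
    (Real.continuous_exp.continuousAt.tendsto).comp (aux_exponent x k)
  have hprod := hA.mul hexp
  have hlim : 1 / (k.factorial : ℝ) * Real.exp (-((k : ℝ) * x))
      = Real.exp (-((k : ℝ) * x)) / k.factorial := by ring
  rw [hlim] at hprod
  refine hprod.congr' ?_
  have hev : ∀ᶠ n : ℕ in atTop, u n < 1/2 := by
    have := hu0.eventually_lt_const (by norm_num : (0:ℝ) < 1/2)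
    simpa using this
  filter_upwards [hev, eventually_ge_atTop 1] with n hun hn1
  have hn0 : (0 : ℝ) < (n : ℝ) := by exact_mod_cast hn1
  have hpos : 0 < 1 - u n := by linarith
  have hmax : max (1 - u n) 0 = 1 - u n := max_eq_left (le_of_lt hpos)
  have hcast : ((n - 1 : ℕ) : ℝ) = (n : ℝ) - 1 := by
    have : 1 ≤ n := hn1
    push_cast [Nat.cast_sub this]
    ring
  have hexp_split : Real.exp ((k : ℝ) * Real.log n + ((n : ℝ) - 1) * Real.log (1 - u n))
      = (n : ℝ) ^ k * (1 - u n) ^ (n - 1) := by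
    rw [Real.exp_add, ← hcast, Real.exp_nat_mul, Real.exp_nat_mul, Real.exp_log hn0,
      Real.exp_log hpos]
  rw [hexp_split, hmax]
  have hnk : ((n : ℝ)) ^ k ≠ 0 := by positivity
  field_simp

/-- Bound: `choose n k ≤ n^k / k!` in `ℝ`. -/
private lemma aux_choose_bound (n k : ℕ) :
    (n.choose k : ℝ) * k.factorial ≤ (n : ℝ) ^ k := by
  have h : k.factorial * n.choose k ≤ n ^ k := by
    rw [← Nat.descFactorial_eq_factorial_mul_choose]
    exact Nat.descFactorial_le_pow n k
  calc (n.choose k : ℝ) * k.factorial = ((k.factorial * n.choose k : ℕ) : ℝ) := by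
        push_cast; ring
    _ ≤ ((n ^ k : ℕ) : ℝ) := by exact_mod_cast h
    _ = (n : ℝ) ^ k := by push_cast; ring

/-- The key analytic limit. -/
private lemma aux_analytic_main (x : ℝ) :
    Tendsto (fun n : ℕ => ∑ k ∈ range (n + 1),
        (-1 : ℝ) ^ k * (n.choose k : ℝ)
          * max (1 - (k : ℝ) * ((x + Real.log n) / n)) 0 ^ (n - 1))
      atTop (nhds (Real.exp (-Real.exp (-x)))) := by
  classical
  set F : ℕ → ℕ → ℝ := fun n k => (-1 : ℝ) ^ k * (n.choose k : ℝ)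
      * max (1 - (k : ℝ) * ((x + Real.log n) / n)) 0 ^ (n - 1) with hF
  set g : ℕ → ℝ := fun k => (-1 : ℝ) ^ k * Real.exp (-((k : ℝ) * x)) / k.factorial with hg
  have htsum_g : ∑' k, g k = Real.exp (-Real.exp (-x)) := by
    have h := congrFun (Real.exp_eq_exp_ℝ) (-Real.exp (-x))
    rw [NormedSpace.exp_eq_tsum ℝ] at h
    rw [h]
    refine tsum_congr fun k => ?_
    rw [hg]
    have : (-Real.exp (-x)) ^ k = (-1 : ℝ) ^ k * Real.exp (-((k : ℝ) * x)) := by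
      rw [neg_pow]
      congr 1
      rw [← Real.exp_nat_mul]
      congr 1
      ring
    rw [this]
    simp [smul_eq_mul]
    ring
  have hbound_summable : Summable (fun k : ℕ => Real.exp (2 * |x| + 1) ^ k / k.factorial) :=
    Real.summable_pow_div_factorial _
  have hptwise : ∀ k : ℕ, Tendsto (fun n : ℕ => F n k) atTop (nhds (g k)) := by
    intro k
    have h := (aux_term_tendsto x k).const_mul ((-1 : ℝ) ^ k)
    have hgk : g k = (-1 : ℝ) ^ k * (Real.exp (-((k : ℝ) * x)) / k.factorial) := by
      simp only [hg, mul_div_assoc]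
    rw [hgk]
    refine h.congr fun n => ?_
    rw [hF]
    ring
  have hbound : ∀ᶠ n : ℕ in atTop, ∀ k : ℕ,
      ‖F n k‖ ≤ Real.exp (2 * |x| + 1) ^ k / k.factorial := by
    filter_upwards [eventually_ge_atTop 1] with n hn1 k
    have hn0 : (0 : ℝ) < (n : ℝ) := by exact_mod_cast hn1
    set u : ℝ := (k : ℝ) * ((x + Real.log n) / n) with hu
    have hmaxnn : (0 : ℝ) ≤ max (1 - u) 0 := le_max_right _ _
    have hnormF : ‖F n k‖ = (n.choose k : ℝ) * max (1 - u) 0 ^ (n - 1) := by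
      rw [hF]
      rw [norm_mul, norm_mul]
      simp [abs_of_nonneg hmaxnn, abs_of_nonneg (pow_nonneg hmaxnn _)]
      left; rw [abs_of_nonneg (le_max_right _ _)]
    have hmax_le : max (1 - u) 0 ≤ Real.exp (-u) := by
      refine max_le ?_ (Real.exp_pos _).le
      linarith [Real.add_one_le_exp (-u)]
    have hpow_le : max (1 - u) 0 ^ (n - 1) ≤ Real.exp (-u) ^ (n - 1) :=
      pow_le_pow_left₀ hmaxnn hmax_le _
    have hfacpos : (0 : ℝ) < (k.factorial : ℝ) := by positivity
    have hchoose : (n.choose k : ℝ) ≤ (n : ℝ) ^ k / k.factorial := by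
      rw [le_div_iff₀ hfacpos]
      exact aux_choose_bound n k
    have hcast : ((n - 1 : ℕ) : ℝ) = (n : ℝ) - 1 := by
      push_cast [Nat.cast_sub hn1]; ring
    have hkey : (n : ℝ) ^ k * Real.exp (-u) ^ (n - 1) ≤ Real.exp (2 * |x| + 1) ^ k := by
      rw [← Real.exp_nat_mul, ← Real.exp_nat_mul, ← Real.exp_log hn0, ← Real.exp_nat_mul,
        ← Real.exp_add, Real.exp_le_exp]
      rw [hcast]
      have hnu : (n : ℝ) * u = (k : ℝ) * (x + Real.log n) := by
        rw [hu]; field_simp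
      have hlogn_nonneg : 0 ≤ Real.log n := Real.log_natCast_nonneg n
      have hlog_le : Real.log n ≤ (n : ℝ) := by
        have := Real.log_le_sub_one_of_pos hn0
        linarith
      have hu_le : u ≤ (k : ℝ) * (|x| + 1) := by
        rw [hu]
        have h1 : (x + Real.log n) / n ≤ |x| + 1 := by
          rw [div_le_iff₀ hn0]
          have hx : x ≤ |x| := le_abs_self x
          have h1n : (1 : ℝ) ≤ (n : ℝ) := by exact_mod_cast hn1
          nlinarith [abs_nonneg x]
        have hk0 : (0 : ℝ) ≤ (k : ℝ) := Nat.cast_nonneg k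
        exact mul_le_mul_of_nonneg_left h1 hk0
      have hgoal : (k : ℝ) * Real.log n + ((n : ℝ) - 1) * (-u) = -((k:ℝ) * x) + u := by
        have : ((n : ℝ) - 1) * (-u) = -((n:ℝ) * u) + u := by ring
        rw [this, hnu]
        ring
      rw [hgoal]
      have hkx : -((k : ℝ) * x) ≤ (k : ℝ) * |x| := by
        have : -x ≤ |x| := neg_le_abs x
        have hk0 : (0 : ℝ) ≤ (k : ℝ) := Nat.cast_nonneg k
        nlinarith
      have : ((k : ℕ) : ℝ) * (2 * |x| + 1) = (k : ℝ) * |x| + (k : ℝ) * (|x| + 1) := by ring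
      rw [this]
      linarith
    calc ‖F n k‖ = (n.choose k : ℝ) * max (1 - u) 0 ^ (n - 1) := hnormF
      _ ≤ ((n : ℝ) ^ k / k.factorial) * Real.exp (-u) ^ (n - 1) := by
          refine mul_le_mul hchoose hpow_le (pow_nonneg hmaxnn _) (by positivity)
      _ = (n : ℝ) ^ k * Real.exp (-u) ^ (n - 1) / k.factorial := by ring
      _ ≤ Real.exp (2 * |x| + 1) ^ k / k.factorial := by gcongr
  have hmain := tendsto_tsum_of_dominated_convergence hbound_summable hptwise hbound
  rw [htsum_g] at hmain
  refine hmain.congr fun n => ?_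
  refine (tsum_eq_sum ?_)
  intro k hk
  have hkn : n < k := by
    simp only [Finset.mem_range, not_lt] at hk
    omega
  rw [hF]
  simp [Nat.choose_eq_zero_of_lt hkn]

variable {n : ℕ}

private def mySimplex (n : ℕ) : Set (Fin n → ℝ) :=
  {x : Fin n → ℝ | (∀ i, 0 ≤ x i) ∧ ∑ i, x i = 1}

private lemma measurable_mySimplex (n : ℕ) : MeasurableSet (mySimplex n) := by
  have : mySimplex n = (⋂ i, {y : Fin n → ℝ | 0 ≤ y i}) ∩ {y : Fin n → ℝ | ∑ i, y i = 1} := by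
    ext y; simp [mySimplex, forall_and]
  rw [this]
  refine MeasurableSet.inter (MeasurableSet.iInter fun i => ?_) ?_
  · exact measurableSet_le measurable_const (measurable_pi_apply i)
  · exact measurableSet_eq_fun (Finset.univ.measurable_sum fun i _ => measurable_pi_apply i)
      measurable_const

/-- Scaling/translation of Hausdorff measure by `y ↦ v + r • y`. -/
private lemma haus_affine_image (mm : ℕ) (v : Fin n → ℝ) {r : ℝ} (hr : 0 < r)
    (A : Set (Fin n → ℝ)) :
    μH[(mm : ℝ)] ((fun y => v + r • y) '' A) = ENNReal.ofReal (r ^ mm) * μH[(mm : ℝ)] A := by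
  have himg : (fun y => v + r • y) '' A = v +ᵥ (r • A) := by
    rw [← Set.image_smul, ← Set.image_vadd, Set.image_image]
    rfl
  rw [himg, MeasureTheory.hausdorffMeasure_vadd _ (Or.inl (by positivity)),
    Measure.hausdorffMeasure_smul₀ (by positivity) (ne_of_gt hr)]
  rw [NNReal.rpow_natCast, Real.nnnorm_of_nonneg hr.le, ENNReal.ofReal,
    Real.toNNReal_pow hr.le, ENNReal.smul_def, smul_eq_mul]
  rw [Real.toNNReal_of_nonneg hr.le]

/-- Inclusion-exclusion for a finite measure. -/
private lemma incl_excl {α : Type*} [MeasurableSpace α] (ν : Measure α) [IsFiniteMeasure ν]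
    {ι : Type*} [Fintype ι] (B : ι → Set α) (hB : ∀ i, MeasurableSet (B i)) :
    (ν (⋂ i, (B i)ᶜ)).toReal
      = ∑ S ∈ (Finset.univ : Finset ι).powerset,
          (-1 : ℝ) ^ S.card * (ν (⋂ i ∈ S, B i)).toReal := by
  classical
  have hprod_ind : ∀ S : Finset ι,
      (⋂ i ∈ S, B i).indicator (1 : α → ℝ) = ∏ i ∈ S, (B i).indicator 1 := by
    intro S
    induction S using Finset.induction_on with
    | empty => simp
    | @insert a S ha ih =>
      rw [Finset.prod_insert ha, ← ih, ← Set.inter_indicator_one]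
      congr 1
      ext y
      simp [Set.mem_iInter, ha]
  have hmeas_iInter : ∀ S : Finset ι, MeasurableSet (⋂ i ∈ S, B i) := fun S =>
    MeasurableSet.biInter (Finset.countable_toSet S) fun i _ => hB i
  have hpoint : ∀ y : α, (⋂ i, (B i)ᶜ).indicator (1 : α → ℝ) y
      = ∏ i : ι, (1 - (B i).indicator (1 : α → ℝ) y) := by
    intro y
    by_cases h : y ∈ ⋂ i, (B i)ᶜ
    · rw [Set.indicator_of_mem h]
      simp only [Set.mem_iInter, Set.mem_compl_iff] at h
      simp only [Pi.one_apply]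
      rw [eq_comm, Finset.prod_eq_one]
      intro i _
      rw [Set.indicator_of_notMem (h i)]
      norm_num
    · rw [Set.indicator_of_notMem h]
      simp only [Set.mem_iInter, Set.mem_compl_iff, not_forall, not_not] at h
      obtain ⟨i, hi⟩ := h
      rw [eq_comm]
      refine Finset.prod_eq_zero (Finset.mem_univ i) ?_
      rw [Set.indicator_of_mem hi]
      simp
  have hint : ∀ S : Finset ι, Integrable ((⋂ i ∈ S, B i).indicator (1 : α → ℝ)) ν := by
    intro S
    exact (integrable_const (1:ℝ)).indicator (hmeas_iInter S)
  calc (ν (⋂ i, (B i)ᶜ)).toReal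
      = ∫ y, (⋂ i, (B i)ᶜ).indicator (1 : α → ℝ) y ∂ν := by
        rw [integral_indicator_one (MeasurableSet.iInter fun i => (hB i).compl), measureReal_def]
    _ = ∫ y, ∏ i : ι, (1 - (B i).indicator (1 : α → ℝ) y) ∂ν := by
        exact integral_congr_ae (Filter.Eventually.of_forall hpoint)
    _ = ∫ y, ∑ S ∈ (Finset.univ : Finset ι).powerset,
          (-1 : ℝ) ^ S.card * (⋂ i ∈ S, B i).indicator 1 y ∂ν := by
        refine integral_congr_ae (Filter.Eventually.of_forall fun y => ?_)
        dsimp only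
        have expand := Finset.prod_add (fun i : ι => -(B i).indicator (1 : α → ℝ) y)
          (fun _ => (1 : ℝ)) Finset.univ
        have heq : ∏ i : ι, (1 - (B i).indicator (1 : α → ℝ) y)
            = ∏ i : ι, (-(B i).indicator (1 : α → ℝ) y + 1) := by
          refine Finset.prod_congr rfl fun i _ => by ring
        rw [heq, expand]
        refine Finset.sum_congr rfl fun S hS => ?_
        have h1 : ∏ i ∈ S, -(B i).indicator (1 : α → ℝ) y
            = (-1 : ℝ) ^ S.card * ∏ i ∈ S, (B i).indicator 1 y := by
          have : ∀ i ∈ S, -(B i).indicator (1 : α → ℝ) y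
              = (-1 : ℝ) * (B i).indicator 1 y := fun i _ => by ring
          rw [Finset.prod_congr rfl this, Finset.prod_mul_distrib, Finset.prod_const]
        have h2 : ∏ i ∈ S, (B i).indicator (1 : α → ℝ) y
            = (⋂ i ∈ S, B i).indicator 1 y := by
          rw [hprod_ind S, Finset.prod_apply]
        rw [Finset.prod_const_one, mul_one, h1, h2]
    _ = ∑ S ∈ (Finset.univ : Finset ι).powerset,
          (-1 : ℝ) ^ S.card * (ν (⋂ i ∈ S, B i)).toReal := by
        rw [integral_finset_sum]
        · refine Finset.sum_congr rfl fun S _ => ?_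
          rw [integral_const_mul, integral_indicator_one (hmeas_iInter S), measureReal_def]
        · intro S _
          exact ((hint S).const_mul _)

/-- The simplex intersected with `{∀ i ∈ S, t ≤ y i}` as an affine image of the simplex. -/
private lemma simplex_inter_image (n : ℕ) {t : ℝ} (ht : 0 ≤ t) (S : Finset (Fin n))
    {r : ℝ} (hrpos : 0 < r) (hr : r = 1 - S.card * t) :
    mySimplex n ∩ {y | ∀ i ∈ S, t ≤ y i}
      = (fun y => (fun i => if i ∈ S then t else 0) + r • y) '' mySimplex n := by
  have hχ : ∑ i, (if i ∈ S then t else (0:ℝ)) = S.card * t := by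
    rw [Finset.sum_ite_mem, Finset.univ_inter, Finset.sum_const, nsmul_eq_mul]
  ext z
  constructor
  · rintro ⟨⟨hz0, hz1⟩, hzS⟩
    refine ⟨fun i => (z i - if i ∈ S then t else 0) / r, ⟨fun i => ?_, ?_⟩, ?_⟩
    · by_cases hi : i ∈ S
      · simp only [hi, if_true]
        have := hzS i hi
        exact div_nonneg (by linarith) hrpos.le
      · simp only [hi, if_false, sub_zero]
        exact div_nonneg (hz0 i) hrpos.le
    · rw [← Finset.sum_div, Finset.sum_sub_distrib, hz1, hχ, ← hr, div_self hrpos.ne']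
    · funext i
      simp only [Pi.add_apply, Pi.smul_apply, smul_eq_mul]
      field_simp
      ring
  · rintro ⟨y, ⟨hy0, hy1⟩, rfl⟩
    refine ⟨⟨fun i => ?_, ?_⟩, fun i hi => ?_⟩
    · simp only [Pi.add_apply, Pi.smul_apply, smul_eq_mul]
      have hmul : 0 ≤ r * y i := mul_nonneg hrpos.le (hy0 i)
      by_cases hi : i ∈ S <;> simp only [hi, if_true, if_false] <;> linarith
    · simp only [Pi.add_apply, Pi.smul_apply, smul_eq_mul]
      rw [Finset.sum_add_distrib, hχ, ← Finset.mul_sum, hy1, mul_one, hr]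
      ring
    · simp only [Pi.add_apply, Pi.smul_apply, smul_eq_mul, hi, if_true]
      have : 0 ≤ r * y i := mul_nonneg hrpos.le (hy0 i)
      linarith

/-- The part of the simplex where some fixed coordinate vanishes is `μH^{m+1}`-null. -/
private lemma haus_boundary_null (m : ℕ) (i : Fin (m + 2)) :
    μH[((m + 1 : ℕ) : ℝ)] {y : Fin (m + 2) → ℝ | y ∈ mySimplex (m + 2) ∧ y i = 0} = 0 := by
  classical
  have h2 : (2 : ℕ) ≤ m + 2 := by omega
  set j : Fin (m + 2) := if i = ⟨0, by omega⟩ then ⟨1, by omega⟩ else ⟨0, by omega⟩ with hj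
  have hij : j ≠ i := by
    rw [hj]
    by_cases h : i = ⟨0, by omega⟩
    · simp only [h, if_true]
      intro hc
      exact absurd (congrArg Fin.val hc) (by simp)
    · simp only [h, if_false]
      intro hc
      exact h hc.symm
  -- the (m)-dimensional coordinate subspace
  set J : ({k : Fin (m + 2) // k ≠ i ∧ k ≠ j} → ℝ) → (Fin (m + 2) → ℝ) :=
    fun u k => if h : k = i ∨ k = j then 0 else u ⟨k, by push_neg at h; exact h⟩ with hJ
  have hJlip : LipschitzWith 1 J := by
    refine LipschitzWith.of_dist_le_mul fun u v => ?_
    rw [NNReal.coe_one, one_mul]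
    refine (dist_pi_le_iff dist_nonneg).mpr fun k => ?_
    by_cases h : k = i ∨ k = j
    · simp only [hJ, dif_pos h, dist_self]
      exact dist_nonneg
    · simp only [hJ, dif_neg h]
      exact dist_le_pi_dist u v _
  have hcard : Fintype.card {k : Fin (m + 2) // k ≠ i ∧ k ≠ j} = m := by
    rw [Fintype.card_subtype]
    have hfilter : Finset.univ.filter (fun k : Fin (m + 2) => k ≠ i ∧ k ≠ j)
        = Finset.univ \ {i, j} := by
      ext k
      simp [Finset.mem_sdiff]
    rw [hfilter, Finset.card_sdiff_of_subset (Finset.subset_univ _)]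
    have : ({i, j} : Finset (Fin (m + 2))).card = 2 := by
      rw [Finset.card_insert_of_notMem (by simp [Ne.symm hij]), Finset.card_singleton]
    rw [this, Finset.card_univ, Fintype.card_fin]
    omega
  have hdim : dimH (Set.range J) < (((m + 1 : ℕ) : ℝ≥0) : ℝ≥0∞) := by
    refine lt_of_le_of_lt hJlip.dimH_range_le ?_
    rw [Real.dimH_univ_pi, hcard]
    exact_mod_cast Nat.lt_succ_self m
  have hnullJ : μH[((m + 1 : ℕ) : ℝ)] (Set.range J) = 0 := by
    have h0 := hausdorffMeasure_of_dimH_lt hdim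
    convert h0 using 2 <;> norm_cast
  -- the Lipschitz map filling back the `j`-th coordinate
  set F : (Fin (m + 2) → ℝ) → (Fin (m + 2) → ℝ) :=
    fun y => Function.update y j (1 - ∑ l ∈ Finset.univ.erase j, y l) with hFdef
  have hFlip : LipschitzWith ((m + 2 : ℕ) : ℝ≥0) F := by
    refine LipschitzWith.of_dist_le_mul fun y z => ?_
    have hc : (((m + 2 : ℕ) : ℝ≥0) : ℝ) = ((m : ℝ) + 2) := by push_cast; ring
    rw [hc]
    refine (dist_pi_le_iff (by positivity)).mpr fun k => ?_
    by_cases hk : k = j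
    · rw [hk]
      simp only [hFdef, Function.update_self]
      rw [Real.dist_eq]
      have habs : |1 - ∑ l ∈ Finset.univ.erase j, y l - (1 - ∑ l ∈ Finset.univ.erase j, z l)|
          = |∑ l ∈ Finset.univ.erase j, (z l - y l)| := by
        rw [Finset.sum_sub_distrib]
        ring_nf
      rw [habs]
      calc |∑ l ∈ Finset.univ.erase j, (z l - y l)|
          ≤ ∑ l ∈ Finset.univ.erase j, |z l - y l| := Finset.abs_sum_le_sum_abs _ _
        _ ≤ (Finset.univ.erase j).card • dist y z := by
            refine Finset.sum_le_card_nsmul _ _ _ fun l _ => ?_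
            rw [abs_sub_comm, ← Real.dist_eq]
            exact dist_le_pi_dist y z l
        _ ≤ ((m : ℝ) + 2) * dist y z := by
            rw [nsmul_eq_mul]
            have hcard' : ((Finset.univ.erase j).card : ℝ) ≤ (m : ℝ) + 2 := by
              have h4 := Finset.card_erase_le (a := j) (s := (Finset.univ : Finset (Fin (m+2))))
              have h5 : (Finset.univ : Finset (Fin (m+2))).card = m + 2 := by
                rw [Finset.card_univ, Fintype.card_fin]
              have h6 : (Finset.univ.erase j).card ≤ m + 2 := by omega
              exact_mod_cast h6
            exact mul_le_mul_of_nonneg_right hcard' dist_nonneg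
    · simp only [hFdef, Function.update_of_ne hk]
      calc dist (y k) (z k) ≤ dist y z := dist_le_pi_dist y z k
        _ ≤ ((m : ℝ) + 2) * dist y z := by nlinarith [dist_nonneg (x := y) (y := z)]
  have hsub : {y : Fin (m + 2) → ℝ | y ∈ mySimplex (m + 2) ∧ y i = 0}
      ⊆ F '' (Set.range J) := by
    rintro z ⟨⟨hz0, hz1⟩, hzi⟩
    refine ⟨J (fun k => z k.1), ⟨(fun k => z k.1), rfl⟩, ?_⟩
    funext k
    by_cases hk : k = j
    · rw [hk]
      simp only [hFdef, Function.update_self]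
      have hsum : ∑ l ∈ Finset.univ.erase j, J (fun k => z k.1) l
          = ∑ l ∈ Finset.univ.erase j, z l := by
        refine Finset.sum_congr rfl fun l hl => ?_
        have hlk : l ≠ j := Finset.ne_of_mem_erase hl
        by_cases hli : l = i
        · subst hli
          simp only [hJ, dif_pos (Or.inl rfl)]
          exact hzi.symm
        · simp only [hJ, dif_neg (by tauto : ¬(l = i ∨ l = j))]
      rw [hsum, Finset.sum_erase_eq_sub (Finset.mem_univ j), hz1]
      ring
    · simp only [hFdef, Function.update_of_ne hk]
      by_cases hki : k = i
      · subst hki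
        simp only [hJ, dif_pos (Or.inl rfl)]
        exact hzi.symm
      · simp only [hJ, dif_neg (by tauto : ¬(k = i ∨ k = j))]
  refine le_antisymm ?_ zero_le
  calc μH[((m + 1 : ℕ) : ℝ)] {y : Fin (m + 2) → ℝ | y ∈ mySimplex (m + 2) ∧ y i = 0}
      ≤ μH[((m + 1 : ℕ) : ℝ)] (F '' (Set.range J)) := measure_mono hsub
    _ ≤ (((m + 2 : ℕ) : ℝ≥0) : ℝ≥0∞) ^ ((m + 1 : ℕ) : ℝ) * μH[((m + 1 : ℕ) : ℝ)] (Set.range J) :=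
        hFlip.hausdorffMeasure_image_le (by positivity) _
    _ = 0 := by rw [hnullJ, mul_zero]


private lemma haus_pi_eq_volume (mm : ℕ) :
    (μH[((mm : ℕ) : ℝ)] : Measure (Fin mm → ℝ)) = volume := by
  have h := MeasureTheory.hausdorffMeasure_pi_real (ι := Fin mm)
  rw [Fintype.card_fin] at h
  exact h

private lemma haus_simplex_lt_top (m : ℕ) :
    μH[((m + 1 : ℕ) : ℝ)] (mySimplex (m + 2)) < ⊤ := by
  classical
  set P : (Fin (m + 1) → ℝ) → (Fin (m + 2) → ℝ) :=
    fun u => Fin.snoc u (1 - ∑ j, u j) with hP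
  have hPlip : LipschitzWith ((m + 2 : ℕ) : ℝ≥0) P := by
    refine LipschitzWith.of_dist_le_mul fun u v => ?_
    have hc : (((m + 2 : ℕ) : ℝ≥0) : ℝ) = ((m : ℝ) + 2) := by push_cast; ring
    rw [hc]
    refine (dist_pi_le_iff (by positivity)).mpr fun k => ?_
    refine Fin.lastCases ?_ ?_ k
    · simp only [hP, Fin.snoc_last]
      rw [Real.dist_eq]
      have habs : |1 - ∑ j, u j - (1 - ∑ j, v j)| = |∑ j, (v j - u j)| := by
        rw [Finset.sum_sub_distrib]
        ring_nf
      rw [habs]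
      calc |∑ j, (v j - u j)| ≤ ∑ j, |v j - u j| := Finset.abs_sum_le_sum_abs _ _
        _ ≤ (Finset.univ : Finset (Fin (m + 1))).card • dist u v := by
            refine Finset.sum_le_card_nsmul _ _ _ fun l _ => ?_
            rw [abs_sub_comm, ← Real.dist_eq]
            exact dist_le_pi_dist u v l
        _ ≤ ((m : ℝ) + 2) * dist u v := by
            rw [nsmul_eq_mul, Finset.card_univ, Fintype.card_fin]
            have : ((m + 1 : ℕ) : ℝ) ≤ (m : ℝ) + 2 := by push_cast; linarith
            exact mul_le_mul_of_nonneg_right this dist_nonneg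
    · intro jj
      simp only [hP, Fin.snoc_castSucc]
      calc dist (u jj) (v jj) ≤ dist u v := dist_le_pi_dist u v jj
        _ ≤ ((m : ℝ) + 2) * dist u v := by nlinarith [dist_nonneg (x := u) (y := v)]
  have hsub : mySimplex (m + 2) ⊆ P '' Metric.closedBall 0 1 := by
    rintro y ⟨hy0, hy1⟩
    set u : Fin (m + 1) → ℝ := fun j => y j.castSucc with hu
    have hmem : u ∈ Metric.closedBall (0 : Fin (m + 1) → ℝ) 1 := by
      rw [Metric.mem_closedBall]
      refine (dist_pi_le_iff zero_le_one).mpr fun j => ?_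
      rw [Real.dist_eq, Pi.zero_apply, sub_zero, abs_of_nonneg (hy0 _)]
      calc y j.castSucc ≤ ∑ i, y i := Finset.single_le_sum (fun i _ => hy0 i) (Finset.mem_univ _)
        _ = 1 := hy1
    refine ⟨u, hmem, ?_⟩
    funext k
    refine Fin.lastCases ?_ ?_ k
    · simp only [hP, Fin.snoc_last]
      have hsplit : ∑ i, y i = ∑ j : Fin (m + 1), y j.castSucc + y (Fin.last (m + 1)) :=
        Fin.sum_univ_castSucc y
      rw [hu]
      rw [hy1] at hsplit
      linarith
    · intro jj
      simp only [hP, Fin.snoc_castSucc, hu]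
  have hball : (μH[((m + 1 : ℕ) : ℝ)] : Measure (Fin (m + 1) → ℝ)) (Metric.closedBall 0 1) < ⊤ := by
    rw [haus_pi_eq_volume]
    exact (isCompact_closedBall _ _).measure_lt_top
  calc μH[((m + 1 : ℕ) : ℝ)] (mySimplex (m + 2))
      ≤ μH[((m + 1 : ℕ) : ℝ)] (P '' Metric.closedBall 0 1) := measure_mono hsub
    _ ≤ (((m + 2 : ℕ) : ℝ≥0) : ℝ≥0∞) ^ ((m + 1 : ℕ) : ℝ)
          * μH[((m + 1 : ℕ) : ℝ)] (Metric.closedBall 0 1) :=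
        hPlip.hausdorffMeasure_image_le (by positivity) _
    _ < ⊤ :=
        ENNReal.mul_lt_top (ENNReal.rpow_lt_top_of_nonneg (by positivity) ENNReal.coe_ne_top) hball

private lemma haus_simplex_pos (m : ℕ) :
    0 < μH[((m + 1 : ℕ) : ℝ)] (mySimplex (m + 2)) := by
  classical
  set π : (Fin (m + 2) → ℝ) → (Fin (m + 1) → ℝ) := fun y j => y j.castSucc with hπ
  have hπlip : LipschitzWith 1 π := by
    refine LipschitzWith.of_dist_le_mul fun y z => ?_
    rw [NNReal.coe_one, one_mul]
    refine (dist_pi_le_iff dist_nonneg).mpr fun j => ?_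
    exact dist_le_pi_dist y z j.castSucc
  set B : Set (Fin (m + 1) → ℝ) :=
    Set.pi Set.univ (fun _ => Set.Icc (0 : ℝ) (1 / (m + 2))) with hB
  have hBsub : B ⊆ π '' mySimplex (m + 2) := by
    intro z hz
    simp only [hB, Set.mem_pi, Set.mem_univ, forall_true_left, Set.mem_Icc] at hz
    have hsum_le : ∑ j, z j ≤ 1 := by
      calc ∑ j, z j ≤ (Finset.univ : Finset (Fin (m + 1))).card • (1 / ((m : ℝ) + 2)) := by
            refine Finset.sum_le_card_nsmul _ _ _ fun j _ => ?_
            exact (hz j).2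
        _ ≤ 1 := by
            rw [nsmul_eq_mul, Finset.card_univ, Fintype.card_fin, mul_one_div,
              div_le_one (by positivity)]
            push_cast
            linarith
    set y : Fin (m + 2) → ℝ := Fin.snoc z (1 - ∑ j, z j) with hy
    have hymem : y ∈ mySimplex (m + 2) := by
      constructor
      · intro k
        refine Fin.lastCases ?_ ?_ k
        · rw [hy]; simp only [Fin.snoc_last]; linarith
        · intro jj
          rw [hy]; simp only [Fin.snoc_castSucc]
          exact (hz jj).1
      · rw [Fin.sum_univ_castSucc]
        rw [hy]
        simp only [Fin.snoc_castSucc, Fin.snoc_last]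
        ring
    refine ⟨y, hymem, ?_⟩
    funext j
    rw [hπ, hy]
    simp only [Fin.snoc_castSucc]
  have hvol : (0 : ℝ≥0∞) < (μH[((m + 1 : ℕ) : ℝ)] : Measure (Fin (m + 1) → ℝ)) B := by
    rw [haus_pi_eq_volume, hB, volume_pi_pi]
    simp only [Real.volume_Icc, sub_zero]
    rw [Finset.prod_const]
    refine ENNReal.pow_pos ?_ _
    rw [ENNReal.ofReal_pos]
    positivity
  have hchain : (μH[((m + 1 : ℕ) : ℝ)] : Measure (Fin (m + 1) → ℝ)) B
      ≤ μH[((m + 1 : ℕ) : ℝ)] (mySimplex (m + 2)) := by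
    calc (μH[((m + 1 : ℕ) : ℝ)] : Measure (Fin (m + 1) → ℝ)) B
        ≤ μH[((m + 1 : ℕ) : ℝ)] (π '' mySimplex (m + 2)) := measure_mono hBsub
      _ ≤ ((1 : ℝ≥0) : ℝ≥0∞) ^ ((m + 1 : ℕ) : ℝ) * μH[((m + 1 : ℕ) : ℝ)] (mySimplex (m + 2)) :=
          hπlip.hausdorffMeasure_image_le (by positivity) _
      _ = μH[((m + 1 : ℕ) : ℝ)] (mySimplex (m + 2)) := by
          rw [ENNReal.coe_one, ENNReal.one_rpow, one_mul]
  exact lt_of_lt_of_le hvol hchain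

private lemma measure_inter_B (m : ℕ) {t : ℝ} (ht : 0 < t) (S : Finset (Fin (m + 2))) :
    μH[((m + 1 : ℕ) : ℝ)] ((⋂ i ∈ S, {y : Fin (m + 2) → ℝ | t < y i}) ∩ mySimplex (m + 2))
      = ENNReal.ofReal (max (1 - S.card * t) 0 ^ (m + 1))
          * μH[((m + 1 : ℕ) : ℝ)] (mySimplex (m + 2)) := by
  classical
  by_cases hcase : 0 < 1 - S.card * t
  · set r : ℝ := 1 - S.card * t with hrdef
    set v : Fin (m + 2) → ℝ := fun i => if i ∈ S then t else 0 with hv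
    have himg := simplex_inter_image (m + 2) ht.le S hcase rfl
    set Age := mySimplex (m + 2) ∩ {y : Fin (m + 2) → ℝ | ∀ i ∈ S, t ≤ y i} with hAge
    set Agt := (⋂ i ∈ S, {y : Fin (m + 2) → ℝ | t < y i}) ∩ mySimplex (m + 2) with hAgt
    have hsub1 : Agt ⊆ Age := by
      rintro z ⟨hz1, hz2⟩
      simp only [Set.mem_iInter, Set.mem_setOf_eq] at hz1
      exact ⟨hz2, fun i hi => (hz1 i hi).le⟩
    have hsub2 : Age \ Agt
        ⊆ ⋃ i ∈ S, (fun y => v + r • y) '' {y | y ∈ mySimplex (m + 2) ∧ y i = 0} := by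
      rintro z ⟨hzA, hzN⟩
      have hzimg : z ∈ (fun y => v + r • y) '' mySimplex (m + 2) := by
        rw [← himg]; exact hzA
      obtain ⟨y, hy, rfl⟩ := hzimg
      have : ∃ i ∈ S, ¬ t < (v + r • y) i := by
        by_contra hcon
        push_neg at hcon
        exact hzN ⟨Set.mem_iInter.mpr fun i => Set.mem_iInter.mpr fun hi => hcon i hi, hzA.1⟩
      obtain ⟨i, hiS, hit⟩ := this
      have hle : t ≤ (v + r • y) i := hzA.2 i hiS
      have heq : (v + r • y) i = t := le_antisymm (not_lt.mp hit) hle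
      have hyi : y i = 0 := by
        simp only [Pi.add_apply, Pi.smul_apply, smul_eq_mul, hv, hiS, if_true] at heq
        have := mul_nonneg hcase.le (hy.1 i)
        nlinarith [hy.1 i, hcase]
      refine Set.mem_biUnion hiS ⟨y, ⟨hy, hyi⟩, rfl⟩
    have hAge_meas : μH[((m + 1 : ℕ) : ℝ)] Age
        = ENNReal.ofReal (r ^ (m + 1)) * μH[((m + 1 : ℕ) : ℝ)] (mySimplex (m + 2)) := by
      rw [himg, haus_affine_image (m + 1) (fun i => if i ∈ S then t else 0) hcase]
    have hnull : μH[((m + 1 : ℕ) : ℝ)] (Age \ Agt) = 0 := by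
      refine measure_mono_null hsub2 ?_
      refine (measure_biUnion_null_iff (Finset.countable_toSet S)).mpr fun i _ => ?_
      rw [haus_affine_image (m + 1) v hcase, haus_boundary_null m i, mul_zero]
    have hAgtAge : μH[((m + 1 : ℕ) : ℝ)] Agt = μH[((m + 1 : ℕ) : ℝ)] Age := by
      refine le_antisymm (measure_mono hsub1) ?_
      calc μH[((m + 1 : ℕ) : ℝ)] Age ≤ μH[((m + 1 : ℕ) : ℝ)] (Agt ∪ (Age \ Agt)) := by
            refine measure_mono fun z hz => ?_
            by_cases h : z ∈ Agt
            · exact Or.inl h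
            · exact Or.inr ⟨hz, h⟩
        _ ≤ μH[((m + 1 : ℕ) : ℝ)] Agt + μH[((m + 1 : ℕ) : ℝ)] (Age \ Agt) := measure_union_le _ _
        _ = μH[((m + 1 : ℕ) : ℝ)] Agt := by rw [hnull, add_zero]
    rw [hAgtAge, hAge_meas]
    congr 2
    rw [max_eq_left hcase.le]
  · -- degenerate case : the intersection is empty
    push_neg at hcase
    have hS : S.Nonempty := by
      rcases S.eq_empty_or_nonempty with h | h
      · exfalso; rw [h] at hcase; simp at hcase; linarith
      · exact h
    have hempty : (⋂ i ∈ S, {y : Fin (m + 2) → ℝ | t < y i}) ∩ mySimplex (m + 2) = ∅ := by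
      rw [Set.eq_empty_iff_forall_notMem]
      rintro z ⟨hz1, hz2⟩
      simp only [Set.mem_iInter, Set.mem_setOf_eq] at hz1
      have h1 : (S.card : ℝ) * t < ∑ i ∈ S, z i := by
        have := Finset.sum_lt_sum_of_nonempty hS (f := fun _ => t) (g := fun i => z i)
          (fun i hi => hz1 i hi)
        rwa [Finset.sum_const, nsmul_eq_mul] at this
      have h2 : ∑ i ∈ S, z i ≤ ∑ i, z i :=
        Finset.sum_le_sum_of_subset_of_nonneg (Finset.subset_univ S)
          (fun i _ _ => hz2.1 i)
      rw [hz2.2] at h2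
      linarith
    rw [hempty, measure_empty]
    have hmax : max (1 - (S.card : ℝ) * t) 0 = 0 := max_eq_right (by linarith)
    rw [hmax, zero_pow (by omega : m + 1 ≠ 0), ENNReal.ofReal_zero, zero_mul]

private lemma formula (x : ℝ) (m : ℕ)
    (ht : 0 < (x + Real.log ((m + 2 : ℕ) : ℝ)) / ((m + 2 : ℕ) : ℝ)) :
    ((simplexUniform (m + 2)) {y : Fin (m + 2) → ℝ |
        ((m + 2 : ℕ) : ℝ) * (⨆ i, y i) ≤ x + Real.log ((m + 2 : ℕ) : ℝ)}).toReal
      = ∑ k ∈ Finset.range ((m + 2) + 1), (-1 : ℝ) ^ k * (((m + 2).choose k : ℕ) : ℝ)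
          * max (1 - (k : ℝ) * ((x + Real.log ((m + 2 : ℕ) : ℝ)) / ((m + 2 : ℕ) : ℝ))) 0
              ^ ((m + 2) - 1) := by
  classical
  set t : ℝ := (x + Real.log ((m + 2 : ℕ) : ℝ)) / ((m + 2 : ℕ) : ℝ) with htdef
  have hidx : ((m + 2 : ℕ) : ℝ) - 1 = ((m + 1 : ℕ) : ℝ) := by push_cast; ring
  set c : ℝ≥0∞ := μH[((m + 1 : ℕ) : ℝ)] (mySimplex (m + 2)) with hc
  have hc0 : c ≠ 0 := (haus_simplex_pos m).ne'
  have hctop : c ≠ ⊤ := (haus_simplex_lt_top m).ne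
  have hcr0 : c.toReal ≠ 0 := ENNReal.toReal_ne_zero.mpr ⟨hc0, hctop⟩
  set ν : Measure (Fin (m + 2) → ℝ) :=
    (μH[((m + 1 : ℕ) : ℝ)]).restrict (mySimplex (m + 2)) with hν
  haveI hfin : IsFiniteMeasure ν := by
    constructor
    rw [hν, Measure.restrict_apply_univ]
    exact haus_simplex_lt_top m
  set B : Fin (m + 2) → Set (Fin (m + 2) → ℝ) := fun i => {y | t < y i} with hB
  have hBmeas : ∀ i, MeasurableSet (B i) := fun i =>
    measurableSet_lt measurable_const (measurable_pi_apply i)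
  have hμ : simplexUniform (m + 2) = c⁻¹ • ν := by
    rw [simplexUniform, hidx]
    rfl
  -- rewrite the event
  have hset : {y : Fin (m + 2) → ℝ |
        ((m + 2 : ℕ) : ℝ) * (⨆ i, y i) ≤ x + Real.log ((m + 2 : ℕ) : ℝ)}
      = ⋂ i, (B i)ᶜ := by
    ext y
    have hnpos : (0 : ℝ) < ((m + 2 : ℕ) : ℝ) := by positivity
    simp only [Set.mem_setOf_eq, Set.mem_iInter, Set.mem_compl_iff, hB, not_lt]
    constructor
    · intro h i
      have hsup : (⨆ i, y i) ≤ t := by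
        rw [htdef, le_div_iff₀ hnpos]
        linarith [h]
      exact le_trans (le_ciSup (Set.finite_range y).bddAbove i) hsup
    · intro h
      have hsup : (⨆ i, y i) ≤ t :=
        ciSup_le fun i => h i
      rw [htdef] at hsup
      rw [mul_comm]
      calc (⨆ i, y i) * ((m + 2 : ℕ) : ℝ)
          ≤ (x + Real.log ((m + 2 : ℕ) : ℝ)) / ((m + 2 : ℕ) : ℝ) * ((m + 2 : ℕ) : ℝ) :=
            mul_le_mul_of_nonneg_right hsup hnpos.le
        _ = x + Real.log ((m + 2 : ℕ) : ℝ) := by field_simp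
  have happly : ((simplexUniform (m + 2)) {y : Fin (m + 2) → ℝ |
        ((m + 2 : ℕ) : ℝ) * (⨆ i, y i) ≤ x + Real.log ((m + 2 : ℕ) : ℝ)}).toReal
      = (ν (⋂ i, (B i)ᶜ)).toReal / c.toReal := by
    rw [hμ, hset, Measure.smul_apply, smul_eq_mul, ENNReal.toReal_mul, ENNReal.toReal_inv]
    ring
  rw [happly]
  rw [incl_excl ν B hBmeas]
  -- compute each intersection measure
  have hterm : ∀ S : Finset (Fin (m + 2)),
      (ν (⋂ i ∈ S, B i)).toReal = max (1 - (S.card : ℝ) * t) 0 ^ (m + 1) * c.toReal := by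
    intro S
    have hmeasS : ν (⋂ i ∈ S, B i) = ENNReal.ofReal (max (1 - S.card * t) 0 ^ (m + 1)) * c := by
      rw [hν, Measure.restrict_apply' (measurable_mySimplex _)]
      exact measure_inter_B m ht S
    rw [hmeasS, ENNReal.toReal_mul, ENNReal.toReal_ofReal (by positivity)]
  have hsum : ∑ S ∈ (Finset.univ : Finset (Fin (m + 2))).powerset,
        (-1 : ℝ) ^ S.card * (ν (⋂ i ∈ S, B i)).toReal
      = (∑ k ∈ Finset.range ((m + 2) + 1), (-1 : ℝ) ^ k * (((m + 2).choose k : ℕ) : ℝ)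
          * max (1 - (k : ℝ) * t) 0 ^ ((m + 2) - 1)) * c.toReal := by
    rw [Finset.sum_powerset]
    rw [Finset.card_univ, Fintype.card_fin]
    rw [Finset.sum_mul]
    refine Finset.sum_congr rfl fun k hk => ?_
    have hconst : ∀ S ∈ Finset.powersetCard k (Finset.univ : Finset (Fin (m + 2))),
        (-1 : ℝ) ^ S.card * (ν (⋂ i ∈ S, B i)).toReal
          = (-1 : ℝ) ^ k * (max (1 - (k : ℝ) * t) 0 ^ (m + 1) * c.toReal) := by
      intro S hS
      have hcard : S.card = k := (Finset.mem_powersetCard.mp hS).2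
      rw [hterm S, hcard]
    rw [Finset.sum_congr rfl hconst, Finset.sum_const, Finset.card_powersetCard,
      Finset.card_univ, Fintype.card_fin, nsmul_eq_mul]
    have : (m + 2) - 1 = m + 1 := by omega
    rw [this]
    ring
  rw [hsum, mul_div_assoc, div_self hcr0, mul_one]

/-- Gumbel limit for the maximum coordinate of a uniform point on the unit simplex:
`P[n·max_i X_i ≤ x + ln n] → exp(-e^{-x})` as `n → ∞`. -/
theorem stmt_8 (x : ℝ) :
    Filter.Tendsto
      (fun n : ℕ =>
        ((simplexUniform n) {y : Fin n → ℝ | (n : ℝ) * (⨆ i, y i) ≤ x + Real.log n}).toReal)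
      Filter.atTop (nhds (Real.exp (-Real.exp (-x)))) := by
  have hlog : Tendsto (fun n : ℕ => Real.log n) atTop atTop :=
    Real.tendsto_log_atTop.comp (tendsto_natCast_atTop_atTop (R := ℝ))
  refine (aux_analytic_main x).congr' ?_
  filter_upwards [eventually_ge_atTop 2, hlog.eventually_gt_atTop (-x)] with n hn2 hlogx
  obtain ⟨m, rfl⟩ : ∃ m, n = m + 2 := ⟨n - 2, by omega⟩
  have hnpos : (0 : ℝ) < ((m + 2 : ℕ) : ℝ) := by positivity
  have ht : 0 < (x + Real.log ((m + 2 : ℕ) : ℝ)) / ((m + 2 : ℕ) : ℝ) :=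
    div_pos (by linarith [hlogx]) hnpos
  exact (formula x m ht).symm
end

section
/- Let X be uniformly distributed on the discrete simplex Δ^n_m = {l ∈ Z_{≥0}^n : |l| = m} and let N = ∑_{i=1}^n 1{X_i > t} for a threshold t ≥ 0. Then E[N^2] = E[N] + n(n−1)·P[X_1 > t, X_2 > t], and hence P[max_i X_i > t] ≥ 2 − 1/E[N] − ((n−1)/n)·P[X_1 > t, X_2 > t] / (P[X_1 > t])^2, provided E[N] > 0. -/
open MeasureTheory ProbabilityTheory
open scoped ENNReal

/-- For `X` uniform on the discrete simplex `Δ^n_m` and `N = ∑_i 1{X_i > t}`: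
`E[N²] = E[N] + n(n-1)·P[X_1 > t, X_2 > t]`, and if `E[N] > 0`, then
`P[max_i X_i > t] ≥ 2 - 1/E[N] - ((n-1)/n)·P[X_1 > t, X_2 > t]/P[X_1 > t]²`. -/
theorem stmt_17 {Ω : Type*} [MeasureSpace Ω] [IsProbabilityMeasure (ℙ : Measure Ω)]
    (n m t : ℕ) (hn : 2 ≤ n)
    (X : Ω → Fin n → ℕ) (hmeas : Measurable X)
    (hsupp : ℙ {ω | ∑ i, X ω i = m} = 1)
    (hunif : ∀ l : Fin n → ℕ, ∑ i, l i = m →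
      ℙ {ω | X ω = l} = (((n + m - 1).choose (n - 1) : ℝ≥0∞))⁻¹)
    (N : Ω → ℕ) (hN : ∀ ω, N ω = (Finset.univ.filter fun i => t < X ω i).card) :
    (∫ ω, (N ω : ℝ) ^ 2 ∂ℙ = (∫ ω, (N ω : ℝ) ∂ℙ)
        + (n : ℝ) * ((n : ℝ) - 1) *
          (ℙ {ω | t < X ω ⟨0, by omega⟩ ∧ t < X ω ⟨1, hn⟩}).toReal) ∧
      (0 < ∫ ω, (N ω : ℝ) ∂ℙ →
        2 - 1 / (∫ ω, (N ω : ℝ) ∂ℙ)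
            - ((n : ℝ) - 1) / (n : ℝ) *
              ((ℙ {ω | t < X ω ⟨0, by omega⟩ ∧ t < X ω ⟨1, hn⟩}).toReal /
                (ℙ {ω | t < X ω ⟨0, by omega⟩}).toReal ^ 2)
          ≤ (ℙ {ω | t < Finset.univ.sup (X ω)}).toReal) := by
  classical
  set c : ℝ≥0∞ := (((n + m - 1).choose (n - 1) : ℝ≥0∞))⁻¹ with hc
  have hfin : {l : Fin n → ℕ | ∑ i, l i = m}.Finite := by
    apply Set.Finite.subset (Set.Finite.pi (fun i : Fin n => Set.finite_Iic m))
    intro l hl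
    simp only [Set.mem_pi, Set.mem_Iic]
    intro i _
    calc l i ≤ ∑ j, l j := Finset.single_le_sum (fun _ _ => Nat.zero_le _) (Finset.mem_univ i)
    _ = m := hl
  set S : Finset (Fin n → ℕ) := hfin.toFinset with hS
  have hmemS : ∀ l, l ∈ S ↔ ∑ i, l i = m := fun l => hfin.mem_toFinset
  have hXl : ∀ l : Fin n → ℕ, MeasurableSet {ω | X ω = l} := fun l =>
    hmeas (measurableSet_singleton l)
  have hcompl : ℙ {ω | ∑ i, X ω i = m}ᶜ = 0 := by
    rw [← prob_compl_eq_zero_iff] at hsupp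
    · exact hsupp
    · exact hmeas (Set.Finite.measurableSet hfin)
  have key : ∀ (Q : (Fin n → ℕ) → Prop) (_ : DecidablePred Q),
      ℙ {ω | Q (X ω)} = c * (S.filter Q).card := by
    intro Q _
    have h1 : ℙ {ω | Q (X ω)} = ℙ ({ω | Q (X ω)} ∩ {ω | ∑ i, X ω i = m}) :=
      (measure_inter_conull hcompl).symm
    have h2 : {ω | Q (X ω)} ∩ {ω | ∑ i, X ω i = m}
        = ⋃ l ∈ S.filter Q, {ω | X ω = l} := by
      ext ω
      simp only [Set.mem_inter_iff, Set.mem_setOf_eq, Set.mem_iUnion, Finset.mem_filter, hmemS]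
      constructor
      · rintro ⟨hq, hs⟩; exact ⟨X ω, ⟨hs, hq⟩, rfl⟩
      · rintro ⟨l, ⟨hs, hq⟩, rfl⟩; exact ⟨hq, hs⟩
    rw [h1, h2, measure_biUnion_finset]
    · rw [Finset.sum_congr rfl (fun l hl => hunif l ((hmemS l).1 (Finset.mem_filter.1 hl).1))]
      rw [Finset.sum_const, nsmul_eq_mul, mul_comm]
    · intro a _ b _ hab
      simp only [Function.onFun, Set.disjoint_left, Set.mem_setOf_eq]
      rintro ω rfl h; exact hab h
    · intro l _; exact hXl l
  have exch : ∀ (σ : Equiv.Perm (Fin n)) (Q : (Fin n → ℕ) → Prop) (_ : DecidablePred Q),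
      ℙ {ω | Q (fun i => X ω (σ i))} = ℙ {ω | Q (X ω)} := by
    intro σ Q _
    rw [key (fun l => Q (fun i => l (σ i))) (fun l => by infer_instance),
      key Q (fun l => by infer_instance)]
    congr 2
    apply Finset.card_bij (fun l _ => fun i => l (σ i))
    · intro l hl
      rw [Finset.mem_filter] at hl ⊢
      rw [hmemS] at hl ⊢
      exact ⟨(Equiv.sum_comp σ l).trans hl.1, hl.2⟩
    · intro a _ b _ hab
      funext i
      simpa using congrFun hab (σ.symm i)
    · intro g hg
      rw [Finset.mem_filter, hmemS] at hg
      have hgg : (fun i => g (σ.symm (σ i))) = g := by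
        funext i; exact congrArg g (σ.symm_apply_apply i)
      refine ⟨fun i => g (σ.symm i), ?_, ?_⟩
      · rw [Finset.mem_filter, hmemS]
        refine ⟨(Equiv.sum_comp σ.symm g).trans hg.1, ?_⟩
        show Q (fun i => g (σ.symm (σ i)))
        rw [hgg]; exact hg.2
      · show (fun i => g (σ.symm (σ i))) = g
        exact hgg
  have hn0 : (0:ℝ) < n := by positivity
  set i0 : Fin n := ⟨0, by omega⟩ with hi0
  set i1 : Fin n := ⟨1, hn⟩ with hi1
  have h01 : i0 ≠ i1 := by simp [hi0, hi1, Fin.ext_iff]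
  have hp : ∀ i : Fin n, ℙ {ω | t < X ω i} = ℙ {ω | t < X ω i0} := by
    intro i
    have := exch (Equiv.swap i0 i) (fun l => t < l i0) (fun l => by infer_instance)
    simpa [Equiv.swap_apply_left] using this
  have hq : ∀ i j : Fin n, i ≠ j →
      ℙ {ω | t < X ω i ∧ t < X ω j} = ℙ {ω | t < X ω i0 ∧ t < X ω i1} := by
    intro i j hij
    set τ : Equiv.Perm (Fin n) := Equiv.swap i0 i with hτ
    set σ : Equiv.Perm (Fin n) := τ * Equiv.swap i1 (τ j) with hσ
    have hσ0 : σ i0 = i := by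
      have h1 : i0 ≠ τ j := by
        intro h
        apply hij
        have : τ i0 = τ (τ j) := by rw [← h]
        simpa [hτ, Equiv.swap_apply_left, Equiv.swap_apply_self] using this
      rw [hσ, Equiv.Perm.mul_apply, Equiv.swap_apply_of_ne_of_ne h01 h1, hτ,
        Equiv.swap_apply_left]
    have hσ1 : σ i1 = j := by
      simp [hσ, Equiv.Perm.mul_apply, Equiv.swap_apply_left, hτ, Equiv.swap_apply_self]
    have := exch σ (fun l => t < l i0 ∧ t < l i1) (fun l => by infer_instance)
    simp only [] at this
    rw [hσ0, hσ1] at this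
    exact this
  -- measurability of the basic events
  have hAmeas : ∀ i : Fin n, MeasurableSet {ω | t < X ω i} := fun i =>
    ((measurable_pi_apply i).comp hmeas) measurableSet_Ioi
  have hABmeas : ∀ i j : Fin n, MeasurableSet {ω | t < X ω i ∧ t < X ω j} := fun i j =>
    (hAmeas i).inter (hAmeas j)
  -- indicator representation of N
  set f : Fin n → Ω → ℝ := fun i => Set.indicator {ω | t < X ω i} (fun _ => (1:ℝ)) with hf
  have hfint : ∀ i, Integrable (f i) ℙ := fun i =>
    (integrable_const (1:ℝ)).indicator (hAmeas i)
  have hNsum : ∀ ω, (N ω : ℝ) = ∑ i, f i ω := by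
    intro ω
    rw [hN, Finset.card_filter]
    push_cast
    refine Finset.sum_congr rfl fun i _ => ?_
    by_cases h : t < X ω i <;> simp [hf, Set.indicator_apply, h]
  have hN2sum : ∀ ω, (N ω : ℝ)^2
      = ∑ i, ∑ j, Set.indicator {ω | t < X ω i ∧ t < X ω j} (fun _ => (1:ℝ)) ω := by
    intro ω
    rw [hNsum ω, sq, Finset.sum_mul_sum]
    refine Finset.sum_congr rfl fun i _ => Finset.sum_congr rfl fun j _ => ?_
    by_cases hi : t < X ω i <;> by_cases hj : t < X ω j <;>
      simp [hf, Set.indicator_apply, hi, hj]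
  have hgint : ∀ i j : Fin n,
      Integrable (Set.indicator {ω | t < X ω i ∧ t < X ω j} (fun _ => (1:ℝ))) ℙ := fun i j =>
    (integrable_const (1:ℝ)).indicator (hABmeas i j)
  set pR : ℝ := (ℙ {ω | t < X ω i0}).toReal with hpR
  set qR : ℝ := (ℙ {ω | t < X ω i0 ∧ t < X ω i1}).toReal with hqR
  have hqR0 : 0 ≤ qR := ENNReal.toReal_nonneg
  have IntN : Integrable (fun ω => (N ω : ℝ)) ℙ :=
    (integrable_finset_sum _ fun i _ => hfint i).congr
      (Filter.Eventually.of_forall fun ω => (hNsum ω).symm)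
  have IntN2 : Integrable (fun ω => (N ω : ℝ)^2) ℙ :=
    (integrable_finset_sum _ fun i (_ : i ∈ Finset.univ) =>
        integrable_finset_sum _ fun j _ => hgint i j).congr
      (Filter.Eventually.of_forall fun ω => (hN2sum ω).symm)
  have ha : ∫ ω, (N ω : ℝ) ∂ℙ = n * pR := by
    calc ∫ ω, (N ω : ℝ) ∂ℙ = ∫ ω, ∑ i, f i ω ∂ℙ :=
          integral_congr_ae (Filter.Eventually.of_forall hNsum)
    _ = ∑ i, ∫ ω, f i ω ∂ℙ := integral_finset_sum _ fun i _ => hfint i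
    _ = ∑ _i : Fin n, pR := by
          refine Finset.sum_congr rfl fun i _ => ?_
          rw [hpR, ← hp i]
          exact integral_indicator_one (hAmeas i)
    _ = n * pR := by simp [Finset.sum_const, Finset.card_univ, nsmul_eq_mul]
  have hb : ∫ ω, (N ω : ℝ)^2 ∂ℙ = n * pR + n * ((n:ℝ) - 1) * qR := by
    calc ∫ ω, (N ω : ℝ)^2 ∂ℙ
        = ∫ ω, ∑ i, ∑ j, Set.indicator {ω | t < X ω i ∧ t < X ω j} (fun _ => (1:ℝ)) ω ∂ℙ :=
          integral_congr_ae (Filter.Eventually.of_forall hN2sum)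
    _ = ∑ i, ∫ ω, ∑ j, Set.indicator {ω | t < X ω i ∧ t < X ω j} (fun _ => (1:ℝ)) ω ∂ℙ :=
          integral_finset_sum _ fun i _ => integrable_finset_sum _ fun j _ => hgint i j
    _ = ∑ i, ∑ j, ∫ ω, Set.indicator {ω | t < X ω i ∧ t < X ω j} (fun _ => (1:ℝ)) ω ∂ℙ :=
          Finset.sum_congr rfl fun i _ => integral_finset_sum _ fun j _ => hgint i j
    _ = ∑ i, ∑ j, (ℙ {ω | t < X ω i ∧ t < X ω j}).toReal :=
          Finset.sum_congr rfl fun i _ => Finset.sum_congr rfl fun j _ =>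
            integral_indicator_one (hABmeas i j)
    _ = ∑ _i : Fin n, (pR + ∑ _j ∈ Finset.univ.erase _i, qR) := by
          refine Finset.sum_congr rfl fun i _ => ?_
          rw [← Finset.add_sum_erase Finset.univ _ (Finset.mem_univ i)]
          congr 1
          · have : {ω | t < X ω i ∧ t < X ω i} = {ω | t < X ω i} := by
              ext ω; simp [and_self]
            rw [this, hpR, hp i]
          · refine Finset.sum_congr rfl fun j hj => ?_
            rw [hqR, hq i j (fun h => (Finset.ne_of_mem_erase hj) h.symm)]
    _ = n * pR + n * ((n:ℝ) - 1) * qR := by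
          have hcard : (Finset.univ.erase i0).card = n - 1 := by
            rw [Finset.card_erase_of_mem (Finset.mem_univ i0), Finset.card_univ, Fintype.card_fin]
          simp only [Finset.sum_const, Finset.card_erase_of_mem, Finset.mem_univ,
            Finset.card_univ, Fintype.card_fin, nsmul_eq_mul]
          have : ((n - 1 : ℕ) : ℝ) = (n:ℝ) - 1 := by
            have : 1 ≤ n := by omega
            push_cast [this]; ring
          rw [this]; ring
  have part1 : ∫ ω, (N ω : ℝ)^2 ∂ℙ = (∫ ω, (N ω : ℝ) ∂ℙ) + (n:ℝ) * ((n:ℝ) - 1) * qR := by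
    rw [hb, ha]
  -- part 2
  have part2 : 0 < ∫ ω, (N ω : ℝ) ∂ℙ →
      2 - 1 / (∫ ω, (N ω : ℝ) ∂ℙ) - ((n:ℝ) - 1) / (n:ℝ) * (qR / pR ^ 2)
        ≤ (ℙ {ω | t < Finset.univ.sup (X ω)}).toReal := by
    intro ha0
    set a : ℝ := ∫ ω, (N ω : ℝ) ∂ℙ with haa
    set b : ℝ := ∫ ω, (N ω : ℝ)^2 ∂ℙ with hbb
    set B : Set Ω := {ω | t < Finset.univ.sup (X ω)} with hB
    have hBeq : B = ⋃ i, {ω | t < X ω i} := by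
      ext ω
      simp [hB, Finset.lt_sup_iff, Set.mem_iUnion]
    have hBmeas : MeasurableSet B := by
      rw [hBeq]; exact MeasurableSet.iUnion fun i => hAmeas i
    set r : ℝ := (ℙ B).toReal with hr
    have hr0 : 0 ≤ r := ENNReal.toReal_nonneg
    have hN0 : ∀ ω, ω ∉ B → (N ω : ℝ) = 0 := by
      intro ω hω
      rw [hBeq] at hω
      simp only [Set.mem_iUnion, Set.mem_setOf_eq, not_exists] at hω
      rw [hN]
      norm_cast
      simp only [Finset.card_eq_zero, Finset.filter_eq_empty_iff]
      exact fun i _ => hω i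
    have hab : a ≤ b := by
      refine integral_mono IntN IntN2 fun ω => ?_
      by_cases h : N ω = 0
      · simp [h]
      · have h1 : (1:ℝ) ≤ (N ω : ℝ) := by exact_mod_cast Nat.one_le_iff_ne_zero.2 h
        nlinarith
    have hb0 : 0 < b := lt_of_lt_of_le ha0 hab
    set lam : ℝ := a / b with hlam
    have hIntB : Integrable (B.indicator (fun _ => (1:ℝ))) ℙ :=
      (integrable_const (1:ℝ)).indicator hBmeas
    have hpt : ∀ ω, 2 * lam * (N ω : ℝ) ≤ lam^2 * (N ω : ℝ)^2 + B.indicator (fun _ => (1:ℝ)) ω := by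
      intro ω
      by_cases hω : ω ∈ B
      · rw [Set.indicator_of_mem hω]
        nlinarith [sq_nonneg (lam * (N ω : ℝ) - 1)]
      · rw [Set.indicator_of_notMem hω, hN0 ω hω]
        simp
    have hint : 2 * lam * a ≤ lam^2 * b + r := by
      have h1 : ∫ ω, 2 * lam * (N ω : ℝ) ∂ℙ
          ≤ ∫ ω, (lam^2 * (N ω : ℝ)^2 + B.indicator (fun _ => (1:ℝ)) ω) ∂ℙ :=
        integral_mono (IntN.const_mul _) ((IntN2.const_mul _).add hIntB) hpt
      have hIB : ∫ ω, B.indicator (fun _ => (1:ℝ)) ω ∂ℙ = r := integral_indicator_one hBmeas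
      rw [integral_const_mul, integral_add (IntN2.const_mul _) hIntB, integral_const_mul,
        hIB] at h1
      exact h1
    have hbne : b ≠ 0 := ne_of_gt hb0
    have hCS : a^2 ≤ b * r := by
      have h := mul_le_mul_of_nonneg_right hint hb0.le
      have e1 : 2 * lam * a * b = 2 * a^2 := by rw [hlam]; field_simp
      have e2 : (lam^2 * b + r) * b = a^2 + r * b := by rw [hlam]; field_simp
      rw [e1, e2] at h
      linarith
    have hpR0 : 0 < pR := by
      rw [ha] at ha0
      nlinarith
    have hba2 : b / a^2 = 1/a + ((n:ℝ) - 1)/(n:ℝ) * (qR / pR^2) := by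
      rw [hb, ha]
      field_simp
    have h2le : 2 ≤ a^2/b + b/a^2 := by
      rw [div_add_div _ _ (ne_of_gt hb0) (ne_of_gt (pow_pos ha0 2)),
        le_div_iff₀ (mul_pos hb0 (pow_pos ha0 2))]
      nlinarith [sq_nonneg (a^2 - b)]
    have hrge : a^2/b ≤ r := (div_le_iff₀ hb0).2 (by linarith [hCS])
    have : 2 - b/a^2 ≤ r := by linarith
    calc 2 - 1/a - ((n:ℝ) - 1)/(n:ℝ) * (qR / pR^2) = 2 - b/a^2 := by rw [hba2]; ring
    _ ≤ r := this
  exact ⟨part1, part2⟩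
end
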